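/- Let rk_1,…,rk_n be megamatroids on {1,…,d}, all of the same rank r (i.e. rk_m({1,…,d}) = r for all m), and let a_1,…,a_n be integers such that Σ_{m=1}^n a_m [Q(rk_m)] = 0 as a function ℝ^d → ℤ. Then Σ_{m=1}^n a_m = 0. -/

import Mathlib

open scoped BigOperators

/-- A megamatroid on the ground set `{1,…,d}` (modeled as `Fin d`): a function from
subsets to `ℤ ∪ {∞}` with `rk ∅ = 0`, `rk univ` finite, and submodularity on finite values. -/
structure Megamatroid (d : ℕ) where
  rk : Finset (Fin d) → WithTop ℤ
  rk_empty : rk ∅ = 0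
  rk_univ_ne_top : rk Finset.univ ≠ ⊤
  submodular : ∀ A B : Finset (Fin d), rk A ≠ ⊤ → rk B ≠ ⊤ →
    rk (A ∪ B) ≠ ⊤ ∧ rk (A ∩ B) ≠ ⊤ ∧ rk (A ∪ B) + rk (A ∩ B) ≤ rk A + rk B

/-- The base polyhedron `Q(rk)` of a megamatroid: points `y ∈ ℝ^d` with
`∑ i, y i = rk(univ)` and `∑ i ∈ A, y i ≤ rk A` whenever `rk A` is finite. -/
def megaQ {d : ℕ} (M : Megamatroid d) : Set (Fin d → ℝ) :=
  {y | (∀ z : ℤ, M.rk Finset.univ = (z : WithTop ℤ) → ∑ i, y i = (z : ℝ)) ∧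
    ∀ A : Finset (Fin d), ∀ z : ℤ, M.rk A = (z : WithTop ℤ) → ∑ i ∈ A, y i ≤ (z : ℝ)}


/-- The indicator function `[Π] : ℝ^d → ℤ` of a subset `Π ⊆ ℝ^d`. -/
noncomputable def indFn {d : ℕ} (P : Set (Fin d → ℝ)) : (Fin d → ℝ) → ℤ :=
  P.indicator fun _ => 1


section AuxValuative
open Set


noncomputable def chiNE {X : Type*} (s : Set X) : ℤ := by
  classical exact if s.Nonempty then 1 else 0

lemma chiNE_pos {X : Type*} {s : Set X} (h : s.Nonempty) : chiNE s = 1 := by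
  simp [chiNE, h]

lemma chiNE_neg {X : Type*} {s : Set X} (h : ¬ s.Nonempty) : chiNE s = 0 := by
  simp [chiNE, h]

lemma oneD {n : ℕ} (a : Fin n → ℤ) (I : Fin n → Set ℝ)
    (hconv : ∀ m, Convex ℝ (I m)) (hcomp : ∀ m, IsCompact (I m))
    (hzero : ∀ t : ℝ, ∑ m, a m * (I m).indicator (fun _ => (1:ℤ)) t = 0) :
    ∑ m, a m * chiNE (I m) = 0 := by
  classical
  set S : Finset (Fin n) := Finset.univ.filter (fun m => (I m).Nonempty) with hS
  set α : Fin n → ℝ := fun m => sInf (I m) with hα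
  set β : Fin n → ℝ := fun m => sSup (I m) with hβ
  have hIcc : ∀ m, (I m).Nonempty → I m = Icc (α m) (β m) := by
    intro m hm
    apply Subset.antisymm (subset_Icc_csInf_csSup (hcomp m).bddBelow (hcomp m).bddAbove)
    exact (hconv m).ordConnected.out ((hcomp m).sInf_mem hm) ((hcomp m).sSup_mem hm)
  have hstep : ∑ m, a m * chiNE (I m) = ∑ m ∈ S, a m := by
    rw [Finset.sum_filter]
    apply Finset.sum_congr rfl
    intro m _
    by_cases hm : (I m).Nonempty
    · simp [chiNE_pos hm, hm]
    · simp [chiNE_neg hm, hm]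
  rw [hstep]
  rw [← Finset.sum_fiberwise_of_maps_to (g := β) (t := S.image β)
      (fun m hm => Finset.mem_image_of_mem β hm) a]
  apply Finset.sum_eq_zero
  intro b _
  -- choose s0 slightly to the right of b
  set T : Finset ℝ := ((S.image β) ∪ (S.image α)).filter (fun c => b < c) with hT
  set s0 : ℝ := if h : T.Nonempty then (b + T.min' h)/2 else b + 1 with hs0
  have hbs : b < s0 := by
    rw [hs0]
    split_ifs with h
    · have := T.min'_mem h
      have hb : b < T.min' h := (Finset.mem_filter.mp this).2
      linarith
    · linarith
  have hsT : ∀ c ∈ T, s0 < c := by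
    intro c hc
    have hbc : b < c := (Finset.mem_filter.mp hc).2
    have : T.Nonempty := ⟨c, hc⟩
    rw [hs0, dif_pos this]
    have := T.min'_le c hc
    linarith
  have key : ∀ m, a m * ((I m).indicator (fun _ => (1:ℤ)) b)
      - a m * ((I m).indicator (fun _ => (1:ℤ)) s0)
      = if m ∈ S.filter (fun m => β m = b) then a m else 0 := by
    intro m
    by_cases hm : (I m).Nonempty
    · have hmem : m ∈ S := by simp [hS, hm]
      have hI := hIcc m hm
      have hαβ : α m ≤ β m := by
        obtain ⟨x, hx⟩ := hm
        have hx' : x ∈ Icc (α m) (β m) := hI ▸ hx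
        exact le_trans hx'.1 hx'.2
      by_cases hb : β m = b
      · have hbI : b ∈ I m := by rw [hI]; exact ⟨hb ▸ hαβ, le_of_eq hb.symm⟩
        have hsI : s0 ∉ I m := by
          rw [hI]; intro hs
          exact absurd hs.2 (by rw [hb]; exact not_le.mpr hbs)
        simp [indicator_of_mem hbI, indicator_of_notMem hsI, hmem, hb]
      · have hrhs : (if m ∈ S.filter (fun m => β m = b) then a m else 0) = 0 := by
          simp [hb]
        rw [hrhs]
        by_cases hbI : b ∈ I m
        · have hbβ : b < β m := by
            have : b ≤ β m := (hI ▸ hbI).2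
            exact lt_of_le_of_ne this (fun h => hb h.symm)
          have hβT : β m ∈ T := by
            refine Finset.mem_filter.mpr ⟨Finset.mem_union_left _ ?_, hbβ⟩
            exact Finset.mem_image_of_mem β hmem
          have hsI : s0 ∈ I m := by
            rw [hI]
            exact ⟨le_trans (hI ▸ hbI).1 (le_of_lt hbs), le_of_lt (hsT _ hβT)⟩
          simp [indicator_of_mem hbI, indicator_of_mem hsI]
        · have hsI : s0 ∉ I m := by
            rw [hI] at hbI ⊢
            rcases lt_or_ge b (α m) with h | h
            · have hαT : α m ∈ T := by
                refine Finset.mem_filter.mpr ⟨Finset.mem_union_right _ ?_, h⟩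
                exact Finset.mem_image_of_mem α hmem
              intro hs
              exact absurd hs.1 (not_le.mpr (hsT _ hαT))
            · have hβb : β m < b := by
                by_contra hc
                exact hbI ⟨h, not_lt.mp hc⟩
              intro hs
              exact absurd hs.2 (not_le.mpr (lt_trans hβb hbs))
          simp [indicator_of_notMem hbI, indicator_of_notMem hsI]
    · have hIe : I m = ∅ := not_nonempty_iff_eq_empty.mp hm
      have : m ∉ S := by simp [hS, hm]
      simp [hIe, this]
  have hsum : ∑ m ∈ S.filter (fun m => β m = b), a m
      = ∑ m, (a m * ((I m).indicator (fun _ => (1:ℤ)) b)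
        - a m * ((I m).indicator (fun _ => (1:ℤ)) s0)) := by
    rw [Finset.sum_congr rfl (fun m _ => key m)]
    rw [Finset.sum_ite_mem]
    simp
  rw [hsum, Finset.sum_sub_distrib, hzero b, hzero s0, sub_zero]

lemma keylemma : ∀ (d n : ℕ) (a : Fin n → ℤ) (C : Fin n → Set (Fin d → ℝ)),
    (∀ m, Convex ℝ (C m)) → (∀ m, IsCompact (C m)) →
    (∀ y, ∑ m, a m * (C m).indicator (fun _ => (1:ℤ)) y = 0) →
    ∑ m, a m * chiNE (C m) = 0 := by
  intro d
  induction d with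
  | zero =>
    intro n a C hconv hcomp hzero
    have h0 := hzero (fun i => i.elim0)
    rw [← h0]
    apply Finset.sum_congr rfl
    intro m _
    congr 1
    by_cases hm : (C m).Nonempty
    · obtain ⟨y, hy⟩ := hm
      have : (fun i : Fin 0 => i.elim0 : Fin 0 → ℝ) = y := Subsingleton.elim _ _
      rw [chiNE_pos ⟨y, hy⟩, indicator_of_mem (this ▸ hy)]
    · rw [chiNE_neg hm, indicator_of_notMem]
      intro hc; exact hm ⟨_, hc⟩
  | succ d ih =>
    intro n a C hconv hcomp hzero
    set π : (Fin (d+1) → ℝ) → (Fin d → ℝ) := fun y => y ∘ Fin.castSucc with hπ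
    have hπlin : IsLinearMap ℝ π := by
      constructor <;> intro x y <;> rfl
    have hπcont : Continuous π := by
      apply continuous_pi
      intro i
      exact continuous_apply _
    set D : Fin n → Set (Fin d → ℝ) := fun m => π '' (C m) with hD
    -- snoc affine structure
    have hsnoc : ∀ (x : Fin d → ℝ) (t : ℝ),
        (Fin.snoc x t : Fin (d+1) → ℝ)
          = (Fin.snoc x 0 : Fin (d+1) → ℝ) + t • (Fin.snoc (0 : Fin d → ℝ) 1 : Fin (d+1) → ℝ) := by
      intro x t
      funext i
      refine Fin.lastCases ?_ ?_ i
      · simp [Fin.snoc_last]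
      · intro j
        simp [Fin.snoc_castSucc]
    have hπsnoc : ∀ (x : Fin d → ℝ) (t : ℝ), π (Fin.snoc x t) = x := by
      intro x t
      funext j
      simp [hπ, Fin.snoc_castSucc]
    have hmemD : ∀ (m : Fin n) (x : Fin d → ℝ),
        x ∈ D m ↔ ∃ t : ℝ, (Fin.snoc x t : Fin (d+1) → ℝ) ∈ C m := by
      intro m x
      constructor
      · rintro ⟨y, hy, rfl⟩
        refine ⟨y (Fin.last d), ?_⟩
        have : (Fin.snoc (π y) (y (Fin.last d)) : Fin (d+1) → ℝ) = y := by
          funext i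
          refine Fin.lastCases ?_ ?_ i
          · simp [Fin.snoc_last]
          · intro j; simp [Fin.snoc_castSucc, hπ]
        rwa [this]
      · rintro ⟨t, ht⟩
        exact ⟨Fin.snoc x t, ht, hπsnoc x t⟩
    -- slices
    have hzeroD : ∀ x : Fin d → ℝ, ∑ m, a m * (D m).indicator (fun _ => (1:ℤ)) x = 0 := by
      intro x
      set I : Fin n → Set ℝ := fun m => {t : ℝ | (Fin.snoc x t : Fin (d+1) → ℝ) ∈ C m} with hI
      have hIconv : ∀ m, Convex ℝ (I m) := by
        intro m s hs t ht p q hp hq hpq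
        show (Fin.snoc x (p • s + q • t) : Fin (d+1) → ℝ) ∈ C m
        have : (Fin.snoc x (p • s + q • t) : Fin (d+1) → ℝ)
            = p • (Fin.snoc x s : Fin (d+1) → ℝ) + q • (Fin.snoc x t : Fin (d+1) → ℝ) := by
          rw [hsnoc x s, hsnoc x t, hsnoc x (p • s + q • t)]
          rw [smul_add, smul_add, smul_smul, smul_smul]
          have h2 : (Fin.snoc x 0 : Fin (d+1) → ℝ)
              = p • (Fin.snoc x 0 : Fin (d+1) → ℝ) + q • (Fin.snoc x 0 : Fin (d+1) → ℝ) := by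
            rw [← add_smul, hpq, one_smul]
          rw [add_add_add_comm, ← h2, add_smul]
          simp [smul_eq_mul]
        rw [this]
        exact hconv m hs ht hp hq hpq
      have hIcomp : ∀ m, IsCompact (I m) := by
        intro m
        obtain ⟨R, hR⟩ := (hcomp m).isBounded.subset_closedBall 0
        have hsub : I m ⊆ Icc (-R) R := by
          intro t ht
          have hy : (Fin.snoc x t : Fin (d+1) → ℝ) ∈ Metric.closedBall 0 R := hR ht
          rw [Metric.mem_closedBall, dist_zero_right] at hy
          have := norm_le_pi_norm (Fin.snoc x t : Fin (d+1) → ℝ) (Fin.last d)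
          rw [Fin.snoc_last] at this
          have habs : |t| ≤ R := le_trans this hy
          exact abs_le.mp habs
        have hclosed : IsClosed (I m) := by
          have hcont : Continuous (fun t : ℝ => (Fin.snoc x t : Fin (d+1) → ℝ)) := by
            have : (fun t : ℝ => (Fin.snoc x t : Fin (d+1) → ℝ))
                = fun t => (Fin.snoc x 0 : Fin (d+1) → ℝ) + t • (Fin.snoc (0 : Fin d → ℝ) 1 : Fin (d+1) → ℝ) := by
              funext t; exact hsnoc x t
            rw [this]
            exact continuous_const.add (continuous_id.smul continuous_const)
          exact IsClosed.preimage hcont (hcomp m).isClosed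
        exact (isCompact_Icc).of_isClosed_subset hclosed hsub
      have hIzero : ∀ t : ℝ, ∑ m, a m * (I m).indicator (fun _ => (1:ℤ)) t = 0 := by
        intro t
        have h0 := hzero (Fin.snoc x t)
        rw [← h0]
        apply Finset.sum_congr rfl
        intro m _
        congr 1
      have := oneD a I hIconv hIcomp hIzero
      rw [← this]
      apply Finset.sum_congr rfl
      intro m _
      congr 1
      by_cases hm : x ∈ D m
      · obtain ⟨t, ht⟩ := (hmemD m x).mp hm
        rw [indicator_of_mem hm, chiNE_pos ⟨t, ht⟩]
      · rw [indicator_of_notMem hm, chiNE_neg]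
        intro ⟨t, ht⟩
        exact hm ((hmemD m x).mpr ⟨t, ht⟩)
    have hDconv : ∀ m, Convex ℝ (D m) := by
      intro m
      exact (hconv m).is_linear_image hπlin
    have hDcomp : ∀ m, IsCompact (D m) := fun m => (hcomp m).image hπcont
    have := ih n a D hDconv hDcomp hzeroD
    rw [← this]
    apply Finset.sum_congr rfl
    intro m _
    congr 1
    by_cases hm : (C m).Nonempty
    · rw [chiNE_pos hm, chiNE_pos (hm.image π)]
    · rw [chiNE_neg hm, chiNE_neg]
      intro ⟨x, y, hy, _⟩
      exact hm ⟨y, hy⟩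

noncomputable def fRk {d : ℕ} (M : Megamatroid d) (A : Finset (Fin d)) : ℤ :=
  WithTop.untopD 0 (M.rk A)

lemma fRk_eq {d : ℕ} (M : Megamatroid d) {A : Finset (Fin d)} {z : ℤ}
    (h : M.rk A = (z : WithTop ℤ)) : fRk M A = z := by
  rw [fRk, h, WithTop.untopD_coe]

lemma fRk_spec {d : ℕ} (M : Megamatroid d) {A : Finset (Fin d)} (h : M.rk A ≠ ⊤) :
    M.rk A = ((fRk M A : ℤ) : WithTop ℤ) := by
  obtain ⟨z, hz⟩ := WithTop.ne_top_iff_exists.mp h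
  rw [← hz, fRk_eq M hz.symm]

lemma fRk_empty {d : ℕ} (M : Megamatroid d) : fRk M ∅ = 0 := by
  have : M.rk ∅ = ((0 : ℤ) : WithTop ℤ) := by rw [M.rk_empty]; rfl
  exact fRk_eq M this

lemma fRk_submod {d : ℕ} (M : Megamatroid d) {A B : Finset (Fin d)}
    (hA : M.rk A ≠ ⊤) (hB : M.rk B ≠ ⊤) :
    fRk M (A ∪ B) + fRk M (A ∩ B) ≤ fRk M A + fRk M B := by
  obtain ⟨h1, h2, h3⟩ := M.submodular A B hA hB
  rw [fRk_spec M hA, fRk_spec M hB, fRk_spec M h1, fRk_spec M h2] at h3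
  rw [← WithTop.coe_add, ← WithTop.coe_add, WithTop.coe_le_coe] at h3
  exact h3

lemma aux_point {d : ℕ} (M : Megamatroid d) :
    ∀ C : Finset (Fin d), M.rk C ≠ ⊤ →
      ∃ y : Fin d → ℝ, (∀ i, i ∉ C → y i = 0) ∧ (∑ i ∈ C, y i = (fRk M C : ℝ)) ∧
        (∀ A, M.rk A ≠ ⊤ → ∑ i ∈ A, y i ≤ (fRk M (A ∩ C) : ℝ)) := by
  classical
  intro C
  induction C using Finset.strongInduction with
  | _ C ih =>
    intro hC
    by_cases hCe : C = ∅
    · subst hCe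
      refine ⟨0, fun i _ => rfl, ?_, ?_⟩
      · simp [fRk_empty]
      · intro A hA
        simp [Finset.inter_empty, fRk_empty]
    · set 𝒮 : Finset (Finset (Fin d)) :=
        C.powerset.filter (fun B => M.rk B ≠ ⊤ ∧ B ≠ C) with h𝒮
      have hES : ∅ ∈ 𝒮 := by
        refine Finset.mem_filter.mpr ⟨Finset.mem_powerset.mpr (Finset.empty_subset C), ?_, ?_⟩
        · rw [M.rk_empty]; exact (by simp : (0 : WithTop ℤ) ≠ ⊤)
        · exact fun h => hCe h.symm
      obtain ⟨C', hC'𝒮, hC'max⟩ := Finset.exists_max_image 𝒮 Finset.card ⟨∅, hES⟩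
      have hC'sub : C' ⊆ C := Finset.mem_powerset.mp (Finset.mem_filter.mp hC'𝒮).1
      have hC'ne : M.rk C' ≠ ⊤ := (Finset.mem_filter.mp hC'𝒮).2.1
      have hC'neq : C' ≠ C := (Finset.mem_filter.mp hC'𝒮).2.2
      have hss : C' ⊂ C := lt_of_le_of_ne hC'sub hC'neq
      obtain ⟨y', hy'0, hy'sum, hy'le⟩ := ih C' hss hC'ne
      obtain ⟨e, heC, heC'⟩ := Finset.exists_of_ssubset hss
      set δ : ℝ := (fRk M C : ℝ) - (fRk M C' : ℝ) with hδ
      set y : Fin d → ℝ := fun i => y' i + if i = e then δ else 0 with hy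
      have atom : ∀ B : Finset (Fin d), M.rk B ≠ ⊤ → B ⊆ C →
          (e ∉ B → B ⊆ C') ∧ (e ∈ B → B ∪ C' = C) := by
        intro B hB hBC
        have hB' : M.rk (B ∪ C') ≠ ⊤ := (M.submodular B C' hB hC'ne).1
        have hB'C : B ∪ C' ⊆ C := Finset.union_subset hBC hC'sub
        constructor
        · intro heB
          have hne : B ∪ C' ≠ C := by
            intro h
            rw [← h] at heC
            rcases Finset.mem_union.mp heC with h' | h'
            · exact heB h'
            · exact heC' h'
          have hmem : B ∪ C' ∈ 𝒮 :=
            Finset.mem_filter.mpr ⟨Finset.mem_powerset.mpr hB'C, hB', hne⟩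
          have := hC'max _ hmem
          have heq : C' = B ∪ C' :=
            Finset.eq_of_subset_of_card_le Finset.subset_union_right this
          intro i hi
          rw [heq]
          exact Finset.mem_union_left _ hi
        · intro heB
          by_contra hne
          have hmem : B ∪ C' ∈ 𝒮 :=
            Finset.mem_filter.mpr ⟨Finset.mem_powerset.mpr hB'C, hB', hne⟩
          have := hC'max _ hmem
          have heq : C' = B ∪ C' :=
            Finset.eq_of_subset_of_card_le Finset.subset_union_right this
          exact heC' (heq ▸ Finset.mem_union_left _ heB)
      have hsum_ite : ∀ A : Finset (Fin d),
          ∑ i ∈ A, y i = (∑ i ∈ A, y' i) + if e ∈ A then δ else 0 := by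
        intro A
        rw [hy]
        rw [Finset.sum_add_distrib, Finset.sum_ite_eq' A e (fun _ => δ)]
      have hAC' : ∀ A : Finset (Fin d), A ∩ C' = (A ∩ C) ∩ C' := by
        intro A
        rw [Finset.inter_assoc]
        congr 1
        exact (Finset.inter_eq_right.mpr hC'sub).symm
      refine ⟨y, ?_, ?_, ?_⟩
      · intro i hi
        rw [hy]
        have h1 : y' i = 0 := hy'0 i (fun h => hi (hC'sub h))
        have h2 : i ≠ e := fun h => hi (h ▸ heC)
        simp [h1, h2]
      · rw [hsum_ite C, if_pos heC]
        have : ∑ i ∈ C, y' i = ∑ i ∈ C', y' i :=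
          (Finset.sum_subset hC'sub (fun i _ hi => hy'0 i hi)).symm
        rw [this, hy'sum, hδ]
        ring
      · intro A hA
        rw [hsum_ite A]
        set B : Finset (Fin d) := A ∩ C with hB
        have hBne : M.rk B ≠ ⊤ := (M.submodular A C hA hC).2.1
        have hBC : B ⊆ C := Finset.inter_subset_right
        by_cases heA : e ∈ A
        · have heB : e ∈ B := Finset.mem_inter.mpr ⟨heA, heC⟩
          have hun : B ∪ C' = C := (atom B hBne hBC).2 heB
          have hsm := fRk_submod M hBne hC'ne
          rw [hun] at hsm
          have h1 : ∑ i ∈ A, y' i ≤ (fRk M (A ∩ C') : ℝ) := hy'le A hA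
          rw [hAC' A, ← hB] at h1
          rw [if_pos heA, hδ]
          have hcast : (fRk M C : ℝ) + (fRk M (B ∩ C') : ℝ) ≤ (fRk M B : ℝ) + (fRk M C' : ℝ) := by
            exact_mod_cast hsm
          linarith
        · have heB : e ∉ B := fun h => heA (Finset.mem_inter.mp h).1
          have hsub : B ⊆ C' := (atom B hBne hBC).1 heB
          have h1 : ∑ i ∈ A, y' i ≤ (fRk M (A ∩ C') : ℝ) := hy'le A hA
          rw [hAC' A, ← hB, Finset.inter_eq_left.mpr hsub] at h1
          rw [if_neg heA, add_zero]
          exact h1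

lemma megaQ_nonempty {d : ℕ} (M : Megamatroid d) : (megaQ M).Nonempty := by
  obtain ⟨y, _, hsum, hle⟩ := aux_point M Finset.univ M.rk_univ_ne_top
  refine ⟨y, ?_, ?_⟩
  · intro z hz
    rwa [fRk_eq M hz] at hsum
  · intro A z hz
    have hA : M.rk A ≠ ⊤ := by rw [hz]; exact WithTop.coe_ne_top
    have := hle A hA
    rwa [Finset.inter_univ, fRk_eq M hz] at this

lemma megaQ_convex {d : ℕ} (M : Megamatroid d) : Convex ℝ (megaQ M) := by
  intro y hy z hz p q hp hq hpq
  have happ : ∀ (A : Finset (Fin d)), ∑ i ∈ A, (p • y + q • z) i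
      = p * (∑ i ∈ A, y i) + q * (∑ i ∈ A, z i) := by
    intro A
    rw [Finset.mul_sum, Finset.mul_sum, ← Finset.sum_add_distrib]
    apply Finset.sum_congr rfl
    intro i _
    simp [smul_eq_mul]
  constructor
  · intro w hw
    rw [happ Finset.univ, hy.1 w hw, hz.1 w hw, ← add_mul, hpq, one_mul]
  · intro A w hw
    rw [happ A]
    have h1 := hy.2 A w hw
    have h2 := hz.2 A w hw
    have h3 := mul_le_mul_of_nonneg_left h1 hp
    have h4 := mul_le_mul_of_nonneg_left h2 hq
    have h5 : p * (w:ℝ) + q * (w:ℝ) = (w:ℝ) := by rw [← add_mul, hpq, one_mul]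
    linarith
lemma megaQ_closed {d : ℕ} (M : Megamatroid d) : IsClosed (megaQ M) := by
  have hrepr : megaQ M =
      (⋂ z ∈ {z : ℤ | M.rk Finset.univ = (z : WithTop ℤ)}, {y : Fin d → ℝ | ∑ i, y i = (z : ℝ)})
      ∩ ⋂ A : Finset (Fin d), ⋂ z ∈ {z : ℤ | M.rk A = (z : WithTop ℤ)},
          {y : Fin d → ℝ | ∑ i ∈ A, y i ≤ (z : ℝ)} := by
    ext y
    simp only [megaQ, mem_setOf_eq, mem_inter_iff, mem_iInter]
  rw [hrepr]
  have hc : ∀ A : Finset (Fin d), Continuous (fun y : Fin d → ℝ => ∑ i ∈ A, y i) :=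
    fun A => continuous_finset_sum _ (fun i _ => continuous_apply i)
  apply IsClosed.inter
  · exact isClosed_biInter (fun z _ => isClosed_eq (hc Finset.univ) continuous_const)
  · exact isClosed_iInter (fun A => isClosed_biInter
      (fun z _ => isClosed_le (hc A) continuous_const))

end AuxValuative

/-- The constant function `1` is valuative: if `∑ m, a_m [Q(rk_m)] = 0` for megamatroids
of common rank `r` on `{1,…,d}`, then `∑ m, a_m = 0`. -/
theorem one_valuative (d : ℕ) (r : ℤ) (n : ℕ) (M : Fin n → Megamatroid d)
    (hrank : ∀ m, (M m).rk Finset.univ = (r : WithTop ℤ))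
    (a : Fin n → ℤ)
    (hzero : (∑ m, a m • indFn (megaQ (M m))) = 0) :
    (∑ m, a m) = 0 := by
  classical
  set p : Fin n → (Fin d → ℝ) := fun m => (megaQ_nonempty (M m)).choose with hp
  have hpQ : ∀ m, p m ∈ megaQ (M m) := fun m => (megaQ_nonempty (M m)).choose_spec
  set R : ℝ := ∑ m, ‖p m‖ with hR
  set C : Fin n → Set (Fin d → ℝ) := fun m => megaQ (M m) ∩ Metric.closedBall 0 R with hC
  have hconv : ∀ m, Convex ℝ (C m) := fun m => (megaQ_convex (M m)).inter (convex_closedBall _ _)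
  have hcomp : ∀ m, IsCompact (C m) := by
    intro m
    exact (isCompact_closedBall (0 : Fin d → ℝ) R).of_isClosed_subset
      ((megaQ_closed (M m)).inter Metric.isClosed_closedBall) Set.inter_subset_right
  have hCne : ∀ m, (C m).Nonempty := by
    intro m
    refine ⟨p m, hpQ m, ?_⟩
    rw [mem_closedBall_zero_iff]
    exact Finset.single_le_sum (fun i _ => norm_nonneg (p i)) (Finset.mem_univ m)
  have hz : ∀ y, ∑ m, a m * (C m).indicator (fun _ => (1:ℤ)) y = 0 := by
    intro y
    by_cases hy : y ∈ Metric.closedBall (0 : Fin d → ℝ) R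
    · have h := congrFun hzero y
      rw [Finset.sum_apply] at h
      simp only [Pi.smul_apply, smul_eq_mul, Pi.zero_apply] at h
      rw [← h]
      apply Finset.sum_congr rfl
      intro m _
      congr 1
      by_cases hm : y ∈ megaQ (M m)
      · rw [Set.indicator_of_mem (Set.mem_inter hm hy), indFn, Set.indicator_of_mem hm]
      · rw [Set.indicator_of_notMem (fun hc => hm hc.1), indFn,
          Set.indicator_of_notMem hm]
    · apply Finset.sum_eq_zero
      intro m _
      rw [Set.indicator_of_notMem (fun hc => hy hc.2), mul_zero]
  have hkey := keylemma d n a C hconv hcomp hz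
  rw [← hkey]
  apply Finset.sum_congr rfl
  intro m _
  rw [chiNE_pos (hCne m), mul_one]
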